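/- In the setting of poly-Poisson structures of Dirac type: let V be finite-dimensional with skew forms ω¹,…,ωᵏ satisfying ⋂_A Ker ωᴬ = {0}, D ⊆ V with D ∩ D^⊥ = {0} (D^⊥ = ⋂_A (ωᴬ♭)⁻¹(D°)), and S = {ᾱ ∈ (V*)ᵏ : ∃X ∈ D, ᾱ|_D = ω̄♭(X)|_D}. Define Λ̄♯ : S → V by Λ̄♯(ᾱ) = X where X ∈ D and ω̄♭(X)|_D = ᾱ|_D. Then Λ̄♯ is well defined (if X, Y ∈ D with ω̄♭(X)|_D = ω̄♭(Y)|_D then X = Y), satisfies ᾱ(Λ̄♯(ᾱ)) = 0 for all ᾱ ∈ S, and if ᾱ ∈ S satisfies ᾱ(Λ̄♯(β̄)) = 0 for all β̄ ∈ S then Λ̄♯(ᾱ) = 0. -/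
import Mathlib


/-- poly-Poisson structures of Dirac type.  The map Λ̄♯ : S → V,
ᾱ ↦ X where X ∈ D and ω̄♭(X)|_D = ᾱ|_D, is well defined, satisfies ᾱ(Λ̄♯ᾱ) = 0,
satisfies the nondegeneracy axiom, and has image D. -/
theorem stmt_13 (V : Type*) [AddCommGroup V] [Module ℝ V] [FiniteDimensional ℝ V]
    (k : ℕ) (ω : Fin k → LinearMap.BilinForm ℝ V)
    (hskew : ∀ A (x y : V), ω A x y = - ω A y x)
    (hnd : ∀ x : V, (∀ A (y : V), ω A x y = 0) → x = 0)
    (D : Submodule ℝ V)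
    -- D ∩ D^⊥ = {0}, with D^⊥ = ⋂_A (ωᴬ♭)⁻¹(D°)
    (hD : ∀ v ∈ D, (∀ A, ∀ d ∈ D, ω A v d = 0) → v = 0)
    (S : Set (Fin k → Module.Dual ℝ V))
    (hS : S = {α | ∃ X ∈ D, ∀ A, ∀ d ∈ D, α A d = ω A X d})
    (Λ : (Fin k → Module.Dual ℝ V) → V)
    (hΛ : ∀ α ∈ S, Λ α ∈ D ∧ ∀ A, ∀ d ∈ D, α A d = ω A (Λ α) d) :
    -- well definedness
    (∀ X ∈ D, ∀ Y ∈ D, (∀ A, ∀ d ∈ D, ω A X d = ω A Y d) → X = Y) ∧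
    -- axiom (i)
    (∀ α ∈ S, ∀ A, α A (Λ α) = 0) ∧
    -- axiom (ii)
    (∀ α ∈ S, (∀ β ∈ S, ∀ A, α A (Λ β) = 0) → Λ α = 0) ∧
    -- Im Λ̄♯ = D
    (Λ '' S = (D : Set V)) := by
  have wd : ∀ X ∈ D, ∀ Y ∈ D, (∀ A, ∀ d ∈ D, ω A X d = ω A Y d) → X = Y := by
    intro X hX Y hY h
    have : X - Y = 0 := by
      apply hD _ (Submodule.sub_mem D hX hY)
      intro A d hd
      simp [h A d hd]
    exact sub_eq_zero.mp this
  have img : Λ '' S = (D : Set V) := by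
    ext v
    constructor
    · rintro ⟨α, hα, rfl⟩
      exact (hΛ α hα).1
    · intro hv
      set α : Fin k → Module.Dual ℝ V := fun A => ω A v with hα
      have hαS : α ∈ S := by
        rw [hS]; exact ⟨v, hv, fun A d _ => rfl⟩
      obtain ⟨hΛD, hΛeq⟩ := hΛ α hαS
      exact ⟨α, hαS, wd _ hΛD _ hv (fun A d hd => (hΛeq A d hd).symm)⟩
  refine ⟨wd, ?_, ?_, img⟩
  · intro α hα A
    obtain ⟨hΛD, hΛeq⟩ := hΛ α hα
    rw [hΛeq A _ hΛD]
    have := hskew A (Λ α) (Λ α); linarith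
  · intro α hα h
    obtain ⟨hΛD, hΛeq⟩ := hΛ α hα
    apply hD _ hΛD
    intro A d hd
    have hdD : d ∈ Λ '' S := by rw [img]; exact hd
    obtain ⟨β, hβ, rfl⟩ := hdD
    rw [← hΛeq A _ ((hΛ β hβ).1)]
    exact h β hβ A
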